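/- If m > n are coprime positive integers of opposite parity (m + n odd), then m⁴ − m²n² + n⁴ is not a perfect square; consequently Real.sqrt (m⁴ − m²n² + n⁴) is irrational. -/
import Mathlib

private lemma sqm2 (x : ℕ) : x ^ 2 % 2 = x % 2 := by
  rcases Nat.mod_two_eq_zero_or_one x with h | h
  · obtain ⟨k, rfl⟩ : ∃ k, x = 2 * k := ⟨x / 2, by omega⟩
    have h2 : (2 * k) ^ 2 = 2 * (2 * k ^ 2) := by ring
    rw [h2, Nat.mul_mod_right, Nat.mul_mod_right]
  · obtain ⟨k, rfl⟩ : ∃ k, x = 2 * k + 1 := ⟨x / 2, by omega⟩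
    have h2 : (2 * k + 1) ^ 2 = 1 + 2 * (2 * k ^ 2 + 2 * k) := by ring
    rw [h2, Nat.add_mul_mod_self_left]
    omega

private lemma sqsum_mod2 (x y : ℕ) : (x ^ 2 + y ^ 2) % 2 = (x + y) % 2 := by
  rw [Nat.add_mod, sqm2, sqm2, ← Nat.add_mod]

private lemma mul_mod_two {p q : ℕ} (h : (p + q) % 2 = 1) : p * q % 2 = 0 := by
  have hm := Nat.mul_mod p q 2
  rcases Nat.mod_two_eq_zero_or_one p with h1 | h1 <;>
    rcases Nat.mod_two_eq_zero_or_one q with h2 | h2 <;>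
      rw [h1, h2] at hm <;> simp at hm <;> omega

private lemma sq4_odd {x : ℕ} (h : x % 2 = 1) : x ^ 2 % 4 = 1 := by
  obtain ⟨k, rfl⟩ : ∃ k, x = 2 * k + 1 := ⟨x / 2, by omega⟩
  have h2 : (2 * k + 1) ^ 2 = 1 + 4 * (k ^ 2 + k) := by ring
  rw [h2, Nat.add_mul_mod_self_left]

private lemma sq4_even {x : ℕ} (h : x % 2 = 0) : x ^ 2 % 4 = 0 := by
  obtain ⟨k, rfl⟩ : ∃ k, x = 2 * k := ⟨x / 2, by omega⟩
  have h2 : (2 * k) ^ 2 = 4 * k ^ 2 := by ring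
  rw [h2, Nat.mul_mod_right]

private lemma no_odd_odd_sq {a d b : ℕ} (ha : a % 2 = 1) (hd : d % 2 = 1)
    (h : a ^ 2 + d ^ 2 = b ^ 2) : False := by
  have h1 := sq4_odd ha
  have h2 := sq4_odd hd
  have h3 : b ^ 2 % 4 = 2 := by rw [← h, Nat.add_mod, h1, h2]
  rcases Nat.mod_two_eq_zero_or_one b with hb | hb
  · rw [sq4_even hb] at h3; exact absurd h3 (by norm_num)
  · rw [sq4_odd hb] at h3; exact absurd h3 (by norm_num)

private lemma lt_of_sq_lt {a b : ℕ} (h : a ^ 2 < b ^ 2) : a < b := by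
  by_contra hc
  exact absurd h (not_lt.mpr (Nat.pow_le_pow_left (not_lt.mp hc) 2))

private lemma coprime_sq_split {a b c : ℕ} (h : Nat.Coprime a b) (heq : a * b = c ^ 2) :
    ∃ r s, a = r ^ 2 ∧ b = s ^ 2 := by
  obtain ⟨r, hr⟩ := exists_eq_pow_of_mul_eq_pow (α := ℕ) (Nat.isUnit_iff.mpr h) heq
  obtain ⟨s, hs⟩ := exists_eq_pow_of_mul_eq_pow (α := ℕ) (Nat.isUnit_iff.mpr h.symm)
    (by rw [mul_comm]; exact heq)
  exact ⟨r, s, hr, hs⟩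

private lemma not3 {a b : ℕ} (h : Nat.Coprime a b) (h3 : 3 ∣ a ^ 2 + b ^ 2) : False := by
  have ha : a ^ 2 % 3 = a % 3 * (a % 3) % 3 := by rw [Nat.pow_mod]; ring_nf
  have hb : b ^ 2 % 3 = b % 3 * (b % 3) % 3 := by rw [Nat.pow_mod]; ring_nf
  obtain ⟨k, hk⟩ := h3
  have h0 : (a ^ 2 + b ^ 2) % 3 = 0 := by rw [hk, Nat.mul_mod_right]
  rw [Nat.add_mod, ha, hb] at h0
  have hda : 3 ∣ a := by
    apply Nat.dvd_of_mod_eq_zero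
    have l1 : a % 3 < 3 := Nat.mod_lt _ (by norm_num)
    have l2 : b % 3 < 3 := Nat.mod_lt _ (by norm_num)
    interval_cases h1 : a % 3 <;> interval_cases h2 : b % 3 <;> omega
  have hdb : 3 ∣ b := by
    apply Nat.dvd_of_mod_eq_zero
    have l1 : a % 3 < 3 := Nat.mod_lt _ (by norm_num)
    have l2 : b % 3 < 3 := Nat.mod_lt _ (by norm_num)
    interval_cases h1 : a % 3 <;> interval_cases h2 : b % 3 <;> omega
  have := Nat.dvd_gcd hda hdb
  rw [h] at this
  exact absurd (Nat.le_of_dvd one_pos this) (by norm_num)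

private lemma inner {E F a b : ℕ} (hE : 0 < E) (hF : 0 < F) (ha : 0 < a) (hb : 0 < b)
    (hab : Nat.Coprime a b) (hEF : Nat.Coprime E F) (hprod : E * F = a * b)
    (hparEF : (E + F) % 2 = 1) (heq : E ^ 2 + 4 * b ^ 2 = a ^ 2 + F ^ 2) :
    ∃ r s Z, 0 < s ∧ s < r ∧ Nat.gcd r s = 1 ∧ (r + s) % 2 = 1 ∧
      r ^ 4 + s ^ 4 = Z ^ 2 + r ^ 2 * s ^ 2 ∧ Z ∣ E := by
  set A := Nat.gcd E a with hAdef
  set B := Nat.gcd E b with hBdef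
  set C := Nat.gcd F a with hCdef
  set D := Nat.gcd F b with hDdef
  have hEab : E ∣ a * b := by rw [← hprod]; exact dvd_mul_right E F
  have hFab : F ∣ a * b := by rw [← hprod]; exact dvd_mul_left F E
  have haEF : a ∣ E * F := by rw [hprod]; exact dvd_mul_right a b
  have hbEF : b ∣ E * F := by rw [hprod]; exact dvd_mul_left b a
  have hEs : A * B = E := (Nat.gcd_mul_gcd_eq_iff_dvd_mul_of_coprime hab).mpr hEab
  have hFs : C * D = F := (Nat.gcd_mul_gcd_eq_iff_dvd_mul_of_coprime hab).mpr hFab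
  have has : A * C = a := by
    have := (Nat.gcd_mul_gcd_eq_iff_dvd_mul_of_coprime hEF).mpr haEF
    rwa [Nat.gcd_comm a E, Nat.gcd_comm a F] at this
  have hbs : B * D = b := by
    have := (Nat.gcd_mul_gcd_eq_iff_dvd_mul_of_coprime hEF).mpr hbEF
    rwa [Nat.gcd_comm b E, Nat.gcd_comm b F] at this
  have hA0 : 0 < A := Nat.gcd_pos_of_pos_left a hE
  have hB0 : 0 < B := Nat.gcd_pos_of_pos_left b hE
  have hC0 : 0 < C := Nat.gcd_pos_of_pos_left a hF
  have hD0 : 0 < D := Nat.gcd_pos_of_pos_left b hF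
  have hAE : A ∣ E := Nat.gcd_dvd_left E a
  have hBE : B ∣ E := Nat.gcd_dvd_left E b
  have hCF : C ∣ F := Nat.gcd_dvd_left F a
  have hDF : D ∣ F := Nat.gcd_dvd_left F b
  have cAD : Nat.Coprime A D :=
    Nat.Coprime.coprime_dvd_left hAE (Nat.Coprime.coprime_dvd_right hDF hEF)
  have cBC : Nat.Coprime B C :=
    Nat.Coprime.coprime_dvd_left hBE (Nat.Coprime.coprime_dvd_right hCF hEF)
  have cAC : Nat.Coprime A C :=
    Nat.Coprime.coprime_dvd_left hAE (Nat.Coprime.coprime_dvd_right hCF hEF)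
  -- the key quadratic identity
  have h1 : E ^ 2 = A ^ 2 * B ^ 2 := by rw [← hEs]; ring
  have h2 : b ^ 2 = B ^ 2 * D ^ 2 := by rw [← hbs]; ring
  have h3 : a ^ 2 = A ^ 2 * C ^ 2 := by rw [← has]; ring
  have h4 : F ^ 2 = C ^ 2 * D ^ 2 := by rw [← hFs]; ring
  have hkey : B ^ 2 * (A ^ 2 + 4 * D ^ 2) = C ^ 2 * (A ^ 2 + D ^ 2) := by
    have hh := heq
    rw [h1, h2, h3, h4] at hh
    calc B ^ 2 * (A ^ 2 + 4 * D ^ 2) = A ^ 2 * B ^ 2 + 4 * (B ^ 2 * D ^ 2) := by ring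
      _ = A ^ 2 * C ^ 2 + C ^ 2 * D ^ 2 := hh
      _ = C ^ 2 * (A ^ 2 + D ^ 2) := by ring
  have hC2pos : 0 < C ^ 2 := by positivity
  have hd1 : C ^ 2 ∣ B ^ 2 * (A ^ 2 + 4 * D ^ 2) := ⟨A ^ 2 + D ^ 2, hkey⟩
  have cc : Nat.Coprime (C ^ 2) (B ^ 2) := cBC.symm.pow _ _
  obtain ⟨t, ht⟩ : C ^ 2 ∣ A ^ 2 + 4 * D ^ 2 := cc.dvd_of_dvd_mul_left hd1
  have ht2 : A ^ 2 + D ^ 2 = B ^ 2 * t := by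
    have h5 : C ^ 2 * (B ^ 2 * t) = C ^ 2 * (A ^ 2 + D ^ 2) := by
      rw [← hkey, ht]; ring
    exact (Nat.eq_of_mul_eq_mul_left hC2pos h5).symm
  have td1 : t ∣ A ^ 2 + D ^ 2 := ⟨B ^ 2, by rw [ht2, mul_comm]⟩
  have td2 : t ∣ A ^ 2 + 4 * D ^ 2 := ⟨C ^ 2, by rw [ht, mul_comm]⟩
  have t3d : t ∣ 3 * D ^ 2 := by
    have e : A ^ 2 + 4 * D ^ 2 = (A ^ 2 + D ^ 2) + 3 * D ^ 2 := by ring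
    rw [e] at td2
    exact (Nat.dvd_add_right td1).mp td2
  have t3a : t ∣ 3 * A ^ 2 := by
    have td4 : t ∣ 4 * (A ^ 2 + D ^ 2) := Dvd.dvd.mul_left td1 4
    have e2 : 4 * (A ^ 2 + D ^ 2) = (A ^ 2 + 4 * D ^ 2) + 3 * A ^ 2 := by ring
    rw [e2] at td4
    exact (Nat.dvd_add_right ⟨C ^ 2, by rw [ht, mul_comm]⟩).mp td4
  have t3 : t ∣ 3 := by
    have := Nat.dvd_gcd t3a t3d
    rwa [Nat.gcd_mul_left, Nat.Coprime.gcd_eq_one (cAD.pow _ _), mul_one] at this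
  rcases (Nat.dvd_prime Nat.prime_three).mp t3 with ht1 | ht3
  swap
  · exact absurd (show (3:ℕ) ∣ A ^ 2 + D ^ 2 from ⟨B ^ 2, by rw [ht2, ht3, mul_comm]⟩)
      (fun hcon => not3 cAD hcon)
  rw [ht1, mul_one] at ht2 ht
  -- ht2 : A^2 + D^2 = B^2,  ht : A^2 + 4*D^2 = C^2
  have hAodd : A % 2 = 1 := by
    by_contra hcon
    have h2A : 2 ∣ A := Nat.dvd_of_mod_eq_zero (by omega)
    have h2C2 : 2 ∣ C ^ 2 := by
      rw [← ht]
      exact dvd_add (dvd_pow h2A two_ne_zero) ⟨2 * D ^ 2, by ring⟩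
    have h2C : 2 ∣ C := Nat.Prime.dvd_of_dvd_pow Nat.prime_two h2C2
    have h2E : 2 ∣ E := h2A.trans ⟨B, hEs.symm⟩
    have h2F : 2 ∣ F := h2C.trans ⟨D, hFs.symm⟩
    have := Nat.dvd_gcd h2E h2F
    rw [Nat.coprime_iff_gcd_eq_one.mp hEF] at this
    exact absurd (Nat.le_of_dvd one_pos this) (by norm_num)
  have hCodd : C % 2 = 1 := by
    by_contra hcon
    have h2C : 2 ∣ C := Nat.dvd_of_mod_eq_zero (by omega)
    have h2A2 : 2 ∣ A ^ 2 := by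
      have hx1 : (2:ℕ) ∣ 4 * D ^ 2 := ⟨2 * D ^ 2, by ring⟩
      have hx2 : (2:ℕ) ∣ A ^ 2 + 4 * D ^ 2 := by
        rw [ht]; exact dvd_pow h2C two_ne_zero
      have e : A ^ 2 + 4 * D ^ 2 - 4 * D ^ 2 = A ^ 2 := by simp
      have := Nat.dvd_sub hx2 hx1
      rwa [e] at this
    have h2A : 2 ∣ A := Nat.Prime.dvd_of_dvd_pow Nat.prime_two h2A2
    omega
  have hEB : E % 2 = B % 2 := by
    have hm : E % 2 = A % 2 * (B % 2) % 2 := by rw [← hEs, Nat.mul_mod]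
    rw [hAodd, one_mul] at hm
    omega
  have hFD : F % 2 = D % 2 := by
    have hm : F % 2 = C % 2 * (D % 2) % 2 := by rw [← hFs, Nat.mul_mod]
    rw [hCodd, one_mul] at hm
    omega
  have hDeven : D % 2 = 0 := by
    by_contra hcon
    have hD1 : D % 2 = 1 := by omega
    exact no_odd_odd_sq hAodd hD1 ht2
  -- second factorization
  have hAC : A < C := by
    have h4D : 0 < 4 * D ^ 2 := by positivity
    have : A ^ 2 < C ^ 2 := by linarith [ht, h4D]
    exact lt_of_sq_lt this
  obtain ⟨S, hS⟩ : ∃ S, C = A + 2 * S := ⟨(C - A) / 2, by omega⟩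
  have hRS : (A + S) * S = D ^ 2 := by
    have e1 : (A + 2 * S) ^ 2 = A ^ 2 + 4 * (A * S) + 4 * S ^ 2 := by ring
    rw [hS, e1] at ht
    have hDS : D ^ 2 = A * S + S ^ 2 := by linarith
    rw [hDS]; ring
  have cRS : Nat.Coprime (A + S) S := by
    have hdA : Nat.gcd (A + S) S ∣ A := by
      have := Nat.dvd_sub (Nat.gcd_dvd_left (A + S) S) (Nat.gcd_dvd_right (A + S) S)
      rwa [Nat.add_sub_cancel] at this
    have hdC : Nat.gcd (A + S) S ∣ C := by
      rw [hS, show A + 2 * S = (A + S) + S by ring]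
      exact dvd_add (Nat.gcd_dvd_left _ _) (Nat.gcd_dvd_right _ _)
    have := Nat.dvd_gcd hdA hdC
    rw [Nat.coprime_iff_gcd_eq_one.mp cAC] at this
    exact Nat.dvd_one.mp this
  obtain ⟨r, s, hr, hs2⟩ := coprime_sq_split cRS hRS
  have hSpos : 0 < S := by
    rcases Nat.eq_zero_or_pos S with h0 | h0
    · rw [h0, mul_zero] at hRS
      exact absurd (pow_eq_zero_iff two_ne_zero |>.mp hRS.symm) (by omega)
    · exact h0
  have hDrs : D = r * s := by
    have hsq : (r * s) ^ 2 = D ^ 2 := by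
      rw [← hRS, hr, hs2]; ring
    exact (Nat.pow_left_injective (by norm_num) hsq).symm
  have hαr : A + s ^ 2 = r ^ 2 := by rw [← hs2, ← hr]
  have e1 : r ^ 4 = A ^ 2 + 2 * (A * s ^ 2) + s ^ 4 := by
    calc r ^ 4 = (r ^ 2) ^ 2 := by ring
      _ = (A + s ^ 2) ^ 2 := by rw [hαr]
      _ = A ^ 2 + 2 * (A * s ^ 2) + s ^ 4 := by ring
  have e2 : r ^ 2 * s ^ 2 = A * s ^ 2 + s ^ 4 := by
    calc r ^ 2 * s ^ 2 = (A + s ^ 2) * s ^ 2 := by rw [hαr]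
      _ = A * s ^ 2 + s ^ 4 := by ring
  have e3 : D ^ 2 = r ^ 2 * s ^ 2 := by rw [hDrs]; ring
  have heqn : r ^ 4 + s ^ 4 = B ^ 2 + r ^ 2 * s ^ 2 := by linarith [ht2, e1, e2, e3]
  have hs0 : 0 < s := by
    rcases Nat.eq_zero_or_pos s with h0 | h0
    · rw [h0] at hs2; omega
    · exact h0
  have hsr : s < r := by
    apply lt_of_sq_lt
    have : 0 < A := hA0
    omega
  have hgcd : Nat.gcd r s = 1 := by
    have := cRS
    rw [hr, hs2] at this
    exact Nat.coprime_iff_gcd_eq_one.mp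
      (((Nat.coprime_pow_left_iff two_pos _ _).mp
        ((Nat.coprime_pow_right_iff two_pos _ _).mp this)))
  have hparrs : (r + s) % 2 = 1 := by
    have hC : r ^ 2 + s ^ 2 = C := by rw [← hr, ← hs2]; omega
    have hmm := sqsum_mod2 r s
    rw [hC] at hmm
    omega
  exact ⟨r, s, B, hs0, hsr, hgcd, hparrs, heqn, ⟨A, by rw [← hEs]; ring⟩⟩

private lemma descend (Z : ℕ) : ∀ p q : ℕ, 0 < q → q < p → Nat.gcd p q = 1 →
    (p + q) % 2 = 1 → p ^ 4 + q ^ 4 ≠ Z ^ 2 + p ^ 2 * q ^ 2 := by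
  induction Z using Nat.strong_induction_on with
  | _ Z ih =>
  intro p q hq0 hqp hcop hpar heq
  have hp0 : 0 < p := lt_trans hq0 hqp
  have hq2p2 : q ^ 2 < p ^ 2 := Nat.pow_lt_pow_left hqp two_ne_zero
  obtain ⟨d, hd⟩ : ∃ d, d + q ^ 2 = p ^ 2 := ⟨p ^ 2 - q ^ 2, Nat.sub_add_cancel hq2p2.le⟩
  have hd0 : 0 < d := by linarith
  have h2 : d * q ^ 2 + q ^ 4 = p ^ 2 * q ^ 2 := by
    calc d * q ^ 2 + q ^ 4 = (d + q ^ 2) * q ^ 2 := by ring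
      _ = p ^ 2 * q ^ 2 := by rw [hd]
  have h3 : p ^ 4 = d ^ 2 + 2 * (d * q ^ 2) + q ^ 4 := by
    have e : (d + q ^ 2) ^ 2 = d ^ 2 + 2 * (d * q ^ 2) + q ^ 4 := by ring
    rw [hd] at e
    calc p ^ 4 = (p ^ 2) ^ 2 := by ring
      _ = d ^ 2 + 2 * (d * q ^ 2) + q ^ 4 := e
  have h4 : (p * q) ^ 2 = p ^ 2 * q ^ 2 := by ring
  have hZdd : Z ^ 2 = d ^ 2 + (p * q) ^ 2 := by linarith [heq, h2, h3, h4]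
  -- parity facts
  have hdodd : d % 2 = 1 := by
    have e1 := sqm2 p
    have e2 := sqm2 q
    have e3 : (d + q ^ 2) % 2 = p ^ 2 % 2 := by rw [hd]
    rw [Nat.add_mod, e2, e1] at e3
    omega
  have hpqm : p * q % 2 = 0 := mul_mod_two hpar
  obtain ⟨w, hw⟩ : ∃ w, p * q = 2 * w := Nat.dvd_of_mod_eq_zero hpqm
  have hZodd : Z % 2 = 1 := by
    have c1 : Z % 2 = (d % 2 + 4 * w ^ 2 % 2) % 2 := by
      calc Z % 2 = Z ^ 2 % 2 := (sqm2 Z).symm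
        _ = (d ^ 2 + (2 * w) ^ 2) % 2 := by rw [hZdd, hw]
        _ = (d ^ 2 + 4 * w ^ 2) % 2 := by ring_nf
        _ = (d ^ 2 % 2 + 4 * w ^ 2 % 2) % 2 := Nat.add_mod _ _ _
        _ = (d % 2 + 4 * w ^ 2 % 2) % 2 := by rw [sqm2 d]
    have c2 : 4 * w ^ 2 % 2 = 0 := by
      have : 4 * w ^ 2 = 2 * (2 * w ^ 2) := by ring
      rw [this, Nat.mul_mod_right]
    rw [c2, hdodd] at c1
    simpa using c1
  -- coprimality of Z and d
  have hZd : Nat.Coprime Z d := by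
    by_contra hnc
    obtain ⟨g, hgp, hgZ, hgd⟩ := Nat.Prime.not_coprime_iff_dvd.mp hnc
    have hgZ2 : g ∣ Z ^ 2 := dvd_pow hgZ two_ne_zero
    have hgd2 : g ∣ d ^ 2 := dvd_pow hgd two_ne_zero
    have hsum : g ∣ d ^ 2 + (p * q) ^ 2 := by rw [← hZdd]; exact hgZ2
    have hgpq2 : g ∣ (p * q) ^ 2 := (Nat.dvd_add_right hgd2).mp hsum
    have hgpq : g ∣ p * q := hgp.dvd_of_dvd_pow hgpq2
    have hg1 : g ∣ 1 := by
      rcases (Nat.Prime.dvd_mul hgp).mp hgpq with hgp' | hgq'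
      · have hgp2 : g ∣ p ^ 2 := dvd_pow hgp' two_ne_zero
        have : g ∣ d + q ^ 2 := by rw [hd]; exact hgp2
        have hgq2 : g ∣ q ^ 2 := (Nat.dvd_add_right hgd).mp this
        have hgq : g ∣ q := hgp.dvd_of_dvd_pow hgq2
        rw [← hcop]; exact Nat.dvd_gcd hgp' hgq
      · have hgq2 : g ∣ q ^ 2 := dvd_pow hgq' two_ne_zero
        have hgp2 : g ∣ p ^ 2 := by rw [← hd]; exact dvd_add hgd hgq2
        have hgp' : g ∣ p := hgp.dvd_of_dvd_pow hgp2
        rw [← hcop]; exact Nat.dvd_gcd hgp' hgq'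
    exact Nat.Prime.one_lt hgp |>.ne' (Nat.dvd_one.mp hg1)
  -- halving
  have hdZ : d < Z := by
    have hpos : 0 < (p * q) ^ 2 := by positivity
    exact lt_of_sq_lt (by linarith)
  obtain ⟨u, hu⟩ : ∃ u, Z + d = 2 * u := Nat.dvd_of_mod_eq_zero (by omega)
  obtain ⟨v, hv'⟩ : ∃ v, Z - d = 2 * v := Nat.dvd_of_mod_eq_zero (by omega)
  have hv : Z = d + 2 * v := by omega
  have huv1 : u = d + v := by omega
  have huv : u * v = w ^ 2 := by
    have e : (d + 2 * v) ^ 2 = d ^ 2 + 4 * (d * v) + 4 * v ^ 2 := by ring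
    have e2 : (2 * w) ^ 2 = 4 * w ^ 2 := by ring
    rw [hv, hw] at hZdd
    have h5 : d * v + v ^ 2 = w ^ 2 := by linarith [hZdd, e, e2]
    calc u * v = (d + v) * v := by rw [huv1]
      _ = d * v + v ^ 2 := by ring
      _ = w ^ 2 := h5
  have hZuv : u + v = Z := by omega
  have cuv : Nat.Coprime u v := by
    have hg1 : Nat.gcd u v ∣ Z := by
      rw [← hZuv]; exact dvd_add (Nat.gcd_dvd_left u v) (Nat.gcd_dvd_right u v)
    have hg2 : Nat.gcd u v ∣ d := by
      have e : u - v = d := by omega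
      have := Nat.dvd_sub (Nat.gcd_dvd_left u v) (Nat.gcd_dvd_right u v)
      rwa [e] at this
    have := Nat.dvd_gcd hg1 hg2
    rw [Nat.coprime_iff_gcd_eq_one.mp hZd] at this
    exact Nat.dvd_one.mp this
  obtain ⟨e, f, he, hf⟩ := coprime_sq_split cuv huv
  have hef : e * f = w := by
    have : (e * f) ^ 2 = w ^ 2 := by
      calc (e * f) ^ 2 = e ^ 2 * f ^ 2 := by ring
        _ = u * v := by rw [← he, ← hf]
        _ = w ^ 2 := huv
    exact Nat.pow_left_injective (by norm_num) this
  have hv0 : 0 < v := by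
    rcases Nat.eq_zero_or_pos v with h0 | h0
    · exfalso
      rw [h0, mul_zero] at huv
      have hw0 : w = 0 := by
        have := pow_eq_zero_iff (n := 2) two_ne_zero |>.mp huv.symm
        exact this
      rw [hw0, mul_zero] at hw
      rcases Nat.mul_eq_zero.mp hw with h | h <;> omega
    · exact h0
  have hu0 : 0 < u := by omega
  have he0 : 0 < e := by
    rcases Nat.eq_zero_or_pos e with h0 | h0
    · exfalso; rw [h0] at he; simp at he; omega
    · exact h0
  have hf0 : 0 < f := by
    rcases Nat.eq_zero_or_pos f with h0 | h0
    · exfalso; rw [h0] at hf; simp at hf; omega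
    · exact h0
  have cef : Nat.Coprime e f := by
    have := cuv
    rw [he, hf] at this
    exact (Nat.coprime_pow_left_iff two_pos _ _).mp
      ((Nat.coprime_pow_right_iff two_pos _ _).mp this)
  have hparef : (e + f) % 2 = 1 := by
    have hm := sqsum_mod2 e f
    have hZef : e ^ 2 + f ^ 2 = Z := by rw [← he, ← hf]; omega
    rw [hZef] at hm
    omega
  have hdef : d + f ^ 2 = e ^ 2 := by rw [← he, ← hf]; omega
  have hpqef : p * q = 2 * (e * f) := by rw [hw, hef]
  have hZgt : ∀ x : ℕ, x ∣ e ∨ x ∣ f → x < Z := by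
    intro x hdvd
    have hef2 : e ^ 2 < Z ∧ f ^ 2 < Z := by
      have hZef : e ^ 2 + f ^ 2 = Z := by rw [← he, ← hf]; omega
      have he2 : 0 < e ^ 2 := by positivity
      have hf2 : 0 < f ^ 2 := by positivity
      constructor <;> linarith
    rcases hdvd with h | h
    · have h1 : x ≤ e := Nat.le_of_dvd he0 h
      have h2 : e ≤ e ^ 2 := Nat.le_self_pow two_ne_zero e
      exact lt_of_le_of_lt (le_trans h1 h2) hef2.1
    · have h1 : x ≤ f := Nat.le_of_dvd hf0 h
      have h2 : f ≤ f ^ 2 := Nat.le_self_pow two_ne_zero f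
      exact lt_of_le_of_lt (le_trans h1 h2) hef2.2
  rcases (show q % 2 = 0 ∨ p % 2 = 0 by omega) with hqe | hpe
  · -- q even
    obtain ⟨q1, hq1⟩ : ∃ q1, q = 2 * q1 := ⟨q / 2, by omega⟩
    have hq10 : 0 < q1 := by omega
    have hcop' : Nat.Coprime p q1 :=
      Nat.Coprime.coprime_dvd_right ⟨2, by omega⟩ hcop
    have hprod' : e * f = p * q1 := by
      have e5 : 2 * (p * q1) = 2 * (e * f) := by
        calc 2 * (p * q1) = p * (2 * q1) := by ring
          _ = p * q := by rw [hq1]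
          _ = 2 * (e * f) := hpqef
      omega
    have heq' : e ^ 2 + 4 * q1 ^ 2 = p ^ 2 + f ^ 2 := by
      have hq2 : q ^ 2 = 4 * q1 ^ 2 := by rw [hq1]; ring
      linarith [hd, hdef, hq2]
    obtain ⟨r, s, Z', hs0, hsr, hg, hp', heqn, hdvd⟩ :=
      inner he0 hf0 hp0 hq10 hcop' cef hprod' hparef heq'
    exact ih Z' (hZgt Z' (Or.inl hdvd)) r s hs0 hsr hg hp' heqn
  · -- p even
    obtain ⟨p1, hp1⟩ : ∃ p1, p = 2 * p1 := ⟨p / 2, by omega⟩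
    have hp10 : 0 < p1 := by omega
    have hcop' : Nat.Coprime q p1 :=
      Nat.Coprime.coprime_dvd_right ⟨2, by omega⟩ (Nat.Coprime.symm hcop)
    have hprod' : f * e = q * p1 := by
      have e5 : 2 * (q * p1) = 2 * (f * e) := by
        calc 2 * (q * p1) = (2 * p1) * q := by ring
          _ = p * q := by rw [hp1]
          _ = 2 * (e * f) := hpqef
          _ = 2 * (f * e) := by ring
      omega
    have heq' : f ^ 2 + 4 * p1 ^ 2 = q ^ 2 + e ^ 2 := by
      have hp2 : p ^ 2 = 4 * p1 ^ 2 := by rw [hp1]; ring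
      linarith [hd, hdef, hp2]
    have hparef' : (f + e) % 2 = 1 := by omega
    obtain ⟨r, s, Z', hs0, hsr, hg, hp', heqn, hdvd⟩ :=
      inner hf0 he0 hq0 hp10 hcop' cef.symm hprod' hparef' heq'
    exact ih Z' (hZgt Z' (Or.inr hdvd)) r s hs0 hsr hg hp' heqn

theorem d₂_irrational (m n : ℕ) (hn : 0 < n) (hmn : n < m)
    (hcop : Nat.gcd m n = 1) (hpar : (m + n) % 2 = 1) :
    (¬ ∃ k : ℕ, m ^ 4 - m ^ 2 * n ^ 2 + n ^ 4 = k ^ 2) ∧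
    Irrational (Real.sqrt ((m : ℝ) ^ 4 - (m : ℝ) ^ 2 * (n : ℝ) ^ 2 + (n : ℝ) ^ 4)) := by
  have hle : m ^ 2 * n ^ 2 ≤ m ^ 4 := by
    have h1 : n ^ 2 ≤ m ^ 2 := Nat.pow_le_pow_left hmn.le 2
    calc m ^ 2 * n ^ 2 ≤ m ^ 2 * m ^ 2 := Nat.mul_le_mul_left _ h1
      _ = m ^ 4 := by ring
  have hmain : ¬ ∃ k : ℕ, m ^ 4 - m ^ 2 * n ^ 2 + n ^ 4 = k ^ 2 := by
    rintro ⟨k, hk⟩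
    apply descend k m n hn hmn hcop hpar
    have hz : (m : ℤ) ^ 4 + (n : ℤ) ^ 4 = (k : ℤ) ^ 2 + (m : ℤ) ^ 2 * (n : ℤ) ^ 2 := by
      zify [hle] at hk
      linarith
    exact_mod_cast hz
  refine ⟨hmain, ?_⟩
  have hcast : ((m ^ 4 - m ^ 2 * n ^ 2 + n ^ 4 : ℕ) : ℝ) =
      (m : ℝ) ^ 4 - (m : ℝ) ^ 2 * (n : ℝ) ^ 2 + (n : ℝ) ^ 4 := by
    push_cast [hle]
    ring
  rw [← hcast]
  refine irrational_sqrt_natCast_iff.mpr ?_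
  rintro ⟨r, hr⟩
  exact hmain ⟨r, by rw [hr]; ring⟩
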